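/- (q-Euler α,β lemma.) Let A_q(t) = Σ_{n≥0} E_{n,q} t^n/[n]_q! (so that A_q(t)·(e_q(t)+1) = 2), and define (α_n), (β_n) by t·(D_q A_q)(t) = (Σ α_n t^n/[n]_q!)·A_q(qt) and A_q(t) = (Σ β_n t^n/[n]_q!)·A_q(qt) in K[[t]]. Then α_0 = 0 and α_n = −([n]_q/2) Σ_{j=0}^{n−1} [n−1 choose j]_q E_{j,q} for all n ≥ 1; in particular α_1 = −1/2 and α_n = ([n]_q/2) E_{n−1,q} for n ≥ 2. Moreover β_0 = 1 and β_n = −(q−1) α_n for all n ≥ 1; in particular β_1 = (q−1)/2 and β_n = −((q−1)[n]_q/2) E_{n−1,q} for n ≥ 2. -/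

import Mathlib

noncomputable section

open Finset MvPolynomial

/-- The `q`-integer `[n]_q = 1 + q + ⋯ + q^(n-1)`. -/
def qInt {K : Type*} [Field K] (q : K) (n : ℕ) : K := ∑ i ∈ Finset.range n, q ^ i

/-- The `q`-factorial `[n]_q! = [1]_q [2]_q ⋯ [n]_q`. -/
def qFact {K : Type*} [Field K] (q : K) (n : ℕ) : K := ∏ k ∈ Finset.range n, qInt q (k + 1)

/-- The `q`-binomial coefficient `[n choose k]_q`. -/
def qChoose {K : Type*} [Field K] (q : K) (n k : ℕ) : K :=
  qFact q n / (qFact q k * qFact q (n - k))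

/-- The partial `q`-derivative in the variable `v` (v = 0 is `x`, v = 1 is `y`),
the linear operator determined by `D_{q,x}(x^m y^l) = [m]_q x^(m-1) y^l` and
`D_{q,y}(x^m y^l) = [l]_q x^m y^(l-1)`. -/
def qDeriv {K : Type*} [Field K] (q : K) (v : Fin 2) (P : MvPolynomial (Fin 2) K) :
    MvPolynomial (Fin 2) K :=
  ∑ m ∈ P.support, monomial (m - Finsupp.single v 1) (P.coeff m * qInt q (m v))

/-- Substitution `x ↦ c·x` in a polynomial in the two variables `x = X 0`, `y = X 1`. -/
def substX {K : Type*} [Field K] (c : K) (P : MvPolynomial (Fin 2) K) :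
    MvPolynomial (Fin 2) K :=
  aeval (fun i : Fin 2 => if i = 0 then C c * X 0 else X 1) P

/-- Substitution `y ↦ c·y` in a polynomial in the two variables `x = X 0`, `y = X 1`. -/
def substY {K : Type*} [Field K] (c : K) (P : MvPolynomial (Fin 2) K) :
    MvPolynomial (Fin 2) K :=
  aeval (fun i : Fin 2 => if i = 0 then X 0 else C c * X 1) P

/-- The 2D `q`-Appell polynomials attached to a coefficient sequence `a`:
`A_{n,q}(x,y) = Σ_{i+j+k=n} ([n]_q!/([i]_q![j]_q![k]_q!)) a_i q^(k(k-1)/2) x^j y^k`. -/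
def appell {K : Type*} [Field K] (q : K) (a : ℕ → K) (n : ℕ) : MvPolynomial (Fin 2) K :=
  ∑ i ∈ Finset.range (n + 1), ∑ j ∈ Finset.range (n + 1 - i),
    monomial (Finsupp.single (0 : Fin 2) j + Finsupp.single (1 : Fin 2) (n - i - j))
      (qFact q n / (qFact q i * qFact q j * qFact q (n - i - j)) * a i *
        q ^ ((n - i - j) * (n - i - j - 1) / 2))

section Aux
variable {K : Type*} [Field K] (q : K)

lemma qInt_add (a b : ℕ) : qInt q (a + b) = qInt q a + q ^ a * qInt q b := by
  simp only [qInt, Finset.sum_range_add, pow_add, Finset.mul_sum]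

lemma qInt_mul_sub (n : ℕ) : (q - 1) * qInt q n = q ^ n - 1 := by
  rw [qInt, mul_comm, geom_sum_mul]

lemma qFact_zero : qFact q 0 = 1 := rfl

lemma qFact_succ (n : ℕ) : qFact q (n + 1) = qFact q n * qInt q (n + 1) :=
  Finset.prod_range_succ _ _

variable (hq : ∀ n : ℕ, 1 ≤ n → qInt q n ≠ 0)
include hq

lemma qFact_ne_zero (n : ℕ) : qFact q n ≠ 0 :=
  Finset.prod_ne_zero_iff.mpr fun k _ => hq (k + 1) (by omega)

lemma qChoose_pascal (m k : ℕ) (hk : k < m) :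
    qChoose q (m + 1) (k + 1) = qChoose q m (k + 1) + q ^ (m - k) * qChoose q m k := by
  obtain ⟨d, rfl⟩ : ∃ d, m = k + 1 + d := ⟨m - k - 1, by omega⟩
  simp only [qChoose]
  have h1 : k + 1 + d + 1 - (k + 1) = d + 1 := by omega
  have h2 : k + 1 + d - (k + 1) = d := by omega
  have h3 : k + 1 + d - k = d + 1 := by omega
  rw [h1, h2, h3, qFact_succ q (k + 1 + d), qFact_succ q d, qFact_succ q k]
  have hm : qInt q (k + 1 + d + 1) = qInt q (d + 1) + q ^ (d + 1) * qInt q (k + 1) := by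
    have := qInt_add q (d + 1) (k + 1)
    rw [show d + 1 + (k + 1) = k + 1 + d + 1 by omega] at this
    exact this
  rw [hm]
  have h4 := qFact_ne_zero q hq k
  have h5 := qFact_ne_zero q hq d
  have h6 := qFact_ne_zero q hq (k + 1 + d)
  have h7 := hq (k + 1) (by omega)
  have h8 := hq (d + 1) (by omega)
  field_simp

end Aux

section Key
variable {K : Type*} [Field K] (q : K)
variable (hq : ∀ n : ℕ, 1 ≤ n → qInt q n ≠ 0)
include hq

lemma qChoose_self (n : ℕ) : qChoose q n n = 1 := by
  rw [qChoose, Nat.sub_self, qFact_zero, mul_one, div_self (qFact_ne_zero q hq n)]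

lemma qChoose_zero (n : ℕ) : qChoose q n 0 = 1 := by
  rw [qChoose, Nat.sub_zero, qFact_zero, one_mul, div_self (qFact_ne_zero q hq n)]

lemma keyL (E : ℕ → K)
    (hE : ∀ n : ℕ, 1 ≤ n → E n + ∑ k ∈ Finset.range (n + 1), qChoose q n k * E k = 0)
    (m : ℕ) :
    ∑ j ∈ Finset.range (m + 1), qChoose q m j * q ^ (m - j) * E (j + 1) + E (m + 1)
      + ∑ j ∈ Finset.range (m + 1), qChoose q m j * E j = 0 := by
  have h := hE (m + 1) (by omega)
  have hsplit : ∑ k ∈ Finset.range (m + 2), qChoose q (m + 1) k * E k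
      = ∑ j ∈ Finset.range (m + 1), qChoose q m j * q ^ (m - j) * E (j + 1)
        + ∑ j ∈ Finset.range (m + 1), qChoose q m j * E j := by
    rw [Finset.sum_range_succ' (fun k => qChoose q (m + 1) k * E k) (m + 1)]
    rw [Finset.sum_range_succ (fun k => qChoose q (m + 1) (k + 1) * E (k + 1)) m]
    rw [Finset.sum_range_succ (fun j => qChoose q m j * q ^ (m - j) * E (j + 1)) m]
    rw [Finset.sum_range_succ' (fun j => qChoose q m j * E j) m]
    rw [qChoose_self q hq, qChoose_self q hq, qChoose_zero q hq, qChoose_zero q hq]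
    have hcong : ∀ k ∈ Finset.range m, qChoose q (m + 1) (k + 1) * E (k + 1)
        = qChoose q m (k + 1) * E (k + 1) + qChoose q m k * q ^ (m - k) * E (k + 1) := by
      intro k hk
      rw [qChoose_pascal q hq m k (Finset.mem_range.mp hk)]
      ring
    rw [Finset.sum_congr rfl hcong, Finset.sum_add_distrib]
    rw [Nat.sub_self, pow_zero]
    ring
  rw [hsplit] at h
  linear_combination h

lemma seriesB (E : ℕ → K) (hE0 : E 0 = 1)
    (hE : ∀ n : ℕ, 1 ≤ n → E n + ∑ k ∈ Finset.range (n + 1), qChoose q n k * E k = 0) :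
    PowerSeries.mk (fun n => E n * q ^ n / qFact q n) *
      PowerSeries.mk (fun n => if n = 0 then (2 : K) else q ^ n / qFact q n)
      = PowerSeries.C 2 := by
  ext n
  rw [PowerSeries.coeff_mul,
    Finset.Nat.sum_antidiagonal_eq_sum_range_succ
      (fun a b => PowerSeries.coeff a _ * PowerSeries.coeff b _)]
  simp only [PowerSeries.coeff_mk]
  rcases n with _ | m
  · simp [hE0, PowerSeries.coeff_zero_eq_constantCoeff, qFact_zero]
  · set n := m + 1 with hn
    rw [Finset.sum_range_succ]
    have hterm : ∀ k ∈ Finset.range n,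
        E k * q ^ k / qFact q k * (if n - k = 0 then (2:K) else q ^ (n - k) / qFact q (n - k))
          = q ^ n / qFact q n * (qChoose q n k * E k) := by
      intro k hk
      have hklt : k < n := Finset.mem_range.mp hk
      rw [if_neg (by omega), qChoose]
      have h1 := qFact_ne_zero q hq k
      have h2 := qFact_ne_zero q hq (n - k)
      have h3 := qFact_ne_zero q hq n
      field_simp
      rw [mul_assoc (E k), ← pow_add, show k + (n - k) = n by omega]
    rw [Finset.sum_congr rfl hterm, ← Finset.mul_sum]
    have h := hE n (by omega)
    rw [Finset.sum_range_succ, qChoose_self q hq] at h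
    have hS : ∑ k ∈ Finset.range n, qChoose q n k * E k = -2 * E n := by
      linear_combination h
    rw [hS, Nat.sub_self, if_pos rfl]
    have : (PowerSeries.coeff n) (PowerSeries.C (2 : K)) = 0 := by
      rw [PowerSeries.coeff_C, if_neg (by omega)]
    rw [this]
    ring

end Key

/-- `q`-Euler `α`, `β` lemma. -/
theorem qEuler_alpha_beta
    {K : Type*} [Field K] [CharZero K] (q : K) (hq0 : q ≠ 0) (hq1 : q ≠ 1)
    (hq : ∀ n : ℕ, 1 ≤ n → qInt q n ≠ 0)
    (E : ℕ → K) (hE0 : E 0 = 1)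
    (hE : ∀ n : ℕ, 1 ≤ n → E n + ∑ k ∈ Finset.range (n + 1), qChoose q n k * E k = 0)
    (α β : ℕ → K)
    (hα : PowerSeries.mk (fun n => if n = 0 then (0 : K) else E n / qFact q (n - 1)) =
      PowerSeries.mk (fun n => α n / qFact q n) *
        PowerSeries.mk (fun n => E n * q ^ n / qFact q n))
    (hβ : PowerSeries.mk (fun n => E n / qFact q n) =
      PowerSeries.mk (fun n => β n / qFact q n) *
        PowerSeries.mk (fun n => E n * q ^ n / qFact q n)) :
    α 0 = 0 ∧
    (∀ n : ℕ, 1 ≤ n →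
      α n = -(qInt q n / 2) * ∑ j ∈ Finset.range n, qChoose q (n - 1) j * E j) ∧
    α 1 = -(1 / 2) ∧
    (∀ n : ℕ, 2 ≤ n → α n = (qInt q n / 2) * E (n - 1)) ∧
    β 0 = 1 ∧
    (∀ n : ℕ, 1 ≤ n → β n = -(q - 1) * α n) ∧
    β 1 = (q - 1) / 2 ∧
    (∀ n : ℕ, 2 ≤ n → β n = -((q - 1) * qInt q n / 2) * E (n - 1)) := by
  classical
  have hfne := qFact_ne_zero q hq
  -- explicit coefficient formula for α from hα
  have hBG := seriesB q hq E hE0 hE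
  have hαG : PowerSeries.mk (fun n => if n = 0 then (0 : K) else E n / qFact q (n - 1)) *
      PowerSeries.mk (fun n => if n = 0 then (2 : K) else q ^ n / qFact q n)
      = PowerSeries.mk (fun n => α n / qFact q n) * PowerSeries.C 2 := by
    rw [hα, mul_assoc, hBG]
  have hcoeffα : ∀ n : ℕ, (∑ k ∈ Finset.range (n + 1),
      (if k = 0 then (0 : K) else E k / qFact q (k - 1)) *
        (if n - k = 0 then (2 : K) else q ^ (n - k) / qFact q (n - k)))
      = α n / qFact q n * 2 := by
    intro n
    have h := congrArg (PowerSeries.coeff n) hαG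
    rw [PowerSeries.coeff_mul,
      Finset.Nat.sum_antidiagonal_eq_sum_range_succ
        (fun a b => PowerSeries.coeff a _ * PowerSeries.coeff b _),
      PowerSeries.coeff_mul_C] at h
    simpa using h
  have hα0 : α 0 = 0 := by
    have h := hcoeffα 0
    simpa [qFact_zero] using h
  have hαmain : ∀ n : ℕ, 1 ≤ n →
      α n = -(qInt q n / 2) * ∑ j ∈ Finset.range n, qChoose q (n - 1) j * E j := by
    intro n hn
    obtain ⟨m, rfl⟩ : ∃ m, n = m + 1 := ⟨n - 1, by omega⟩
    have hc := hcoeffα (m + 1)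
    have hsum : (∑ k ∈ Finset.range (m + 2),
        (if k = 0 then (0 : K) else E k / qFact q (k - 1)) *
          (if (m + 1) - k = 0 then (2 : K) else q ^ ((m + 1) - k) / qFact q ((m + 1) - k)))
        = ∑ k ∈ Finset.range (m + 1), E (k + 1) / qFact q k *
            (if m - k = 0 then (2 : K) else q ^ (m - k) / qFact q (m - k)) := by
      rw [Finset.sum_range_succ']
      simp [Nat.succ_sub_succ]
    rw [hsum, Finset.sum_range_succ] at hc
    have hterm : ∀ k ∈ Finset.range m, E (k + 1) / qFact q k *
        (if m - k = 0 then (2 : K) else q ^ (m - k) / qFact q (m - k))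
        = qChoose q m k * q ^ (m - k) * E (k + 1) / qFact q m := by
      intro k hk
      have hklt : k < m := Finset.mem_range.mp hk
      rw [if_neg (by omega), qChoose]
      have h1 := hfne k
      have h2 := hfne (m - k)
      have h3 := hfne m
      field_simp
    rw [Finset.sum_congr rfl hterm, Nat.sub_self, if_pos rfl] at hc
    rw [← Finset.sum_div] at hc
    have hkey := keyL q hq E hE m
    rw [Finset.sum_range_succ, qChoose_self q hq, Nat.sub_self, pow_zero] at hkey
    simp only [Nat.add_sub_cancel]
    have h1 := hfne m
    have h2 := hfne (m + 1)
    rw [qFact_succ q m] at hc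
    have h3 := hq (m + 1) (by omega)
    field_simp at hc
    have h4 : α (m + 1) * 2 = -(qInt q (m + 1)) *
        (∑ j ∈ Finset.range (m + 1), qChoose q m j * E j) :=
      mul_right_cancel₀ h1 (by
        linear_combination (-qFact q m) * hc + (qFact q m * qInt q (m + 1)) * hkey)
    linear_combination h4 / 2
  have hα1 : α 1 = -(1 / 2) := by
    have h := hαmain 1 (by omega)
    simp [qInt, qChoose, qFact, hE0] at h
    rw [h]; norm_num
  have hαn2 : ∀ n : ℕ, 2 ≤ n → α n = (qInt q n / 2) * E (n - 1) := by
    intro n hn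
    obtain ⟨m, rfl⟩ : ∃ m, n = m + 2 := ⟨n - 2, by omega⟩
    have h := hαmain (m + 2) (by omega)
    have hE' := hE (m + 1) (by omega)
    have hS : ∑ j ∈ Finset.range (m + 2), qChoose q (m + 1) j * E j = -E (m + 1) := by
      linear_combination hE'
    simp only [show m + 2 - 1 = m + 1 from rfl] at h ⊢
    rw [hS] at h
    rw [h]; ring
  -- β part
  have hAB : PowerSeries.mk (fun n => E n / qFact q n)
      = PowerSeries.mk (fun n => E n * q ^ n / qFact q n) +
        PowerSeries.C (1 - q) *
          PowerSeries.mk (fun n => if n = 0 then (0 : K) else E n / qFact q (n - 1)) := by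
    ext n
    rcases n with _ | m
    · simp [hE0]
    · simp only [PowerSeries.coeff_mk, map_add, PowerSeries.coeff_C_mul,
        if_neg (Nat.succ_ne_zero m), Nat.succ_sub_one]
    -- goal : E (m+1) / qFact q (m+1) = E (m+1) * q^(m+1)/qFact q (m+1) + (1-q) * (E (m+1)/qFact q m)
      have h1 := hfne m
      have h2 := hq (m + 1) (by omega)
      have hg := qInt_mul_sub q (m + 1)
      rw [qFact_succ q m]
      field_simp
      linear_combination (E (m + 1)) * hg
  have hB0 : PowerSeries.mk (fun n => E n * q ^ n / qFact q n) ≠ 0 := by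
    intro h
    have h0 := congrArg (PowerSeries.coeff 0) h
    simp [hE0, qFact_zero] at h0
  have hβser : PowerSeries.mk (fun n => β n / qFact q n)
      = 1 + PowerSeries.C (1 - q) * PowerSeries.mk (fun n => α n / qFact q n) := by
    apply mul_right_cancel₀ hB0
    rw [← hβ, add_mul, one_mul, mul_assoc, ← hα]
    exact hAB
  have hβ0 : β 0 = 1 := by
    have h := congrArg (PowerSeries.coeff 0) hβser
    simp [qFact_zero, hα0] at h
    exact h
  have hβn : ∀ n : ℕ, 1 ≤ n → β n = -(q - 1) * α n := by
    intro n hn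
    have h := congrArg (PowerSeries.coeff n) hβser
    simp only [PowerSeries.coeff_mk, map_add, PowerSeries.coeff_one,
      PowerSeries.coeff_C_mul, if_neg (by omega : ¬ n = 0)] at h
    have h1 := hfne n
    field_simp at h
    rw [h]; ring
  refine ⟨hα0, hαmain, hα1, hαn2, hβ0, hβn, ?_, ?_⟩
  · rw [hβn 1 (by omega), hα1]; ring
  · intro n hn
    rw [hβn n (by omega), hαn2 n hn]; ring
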